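/- Let A(x) = [[A₁, a, b],[aᵀ, α, x],[bᵀ, x, β]] be a partial real symmetric n×n matrix, where A₁ is a real symmetric (n−2)×(n−2) matrix, a, b ∈ ℝ^{n−2}, α, β ∈ ℝ, and x is the single unspecified entry (appearing symmetrically). Assume A(x) is partially positive semidefinite. Set A₂ = [[A₁, a],[aᵀ, α]], A₃ = [[A₁, b],[bᵀ, β]], and x_± = bᵀ A₁⁺ a ± √((A₂/A₁)(A₃/A₁)). Suppose that A₁ is invertible or rank A₁ = rank A₂. Then for x₀ ∈ ℝ, the completed matrix A(x₀) is positive semidefinite if and only if x₀ ∈ [x_−, x_+]. -/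

import Mathlib

open Matrix MeasureTheory

noncomputable section

attribute [local instance] Classical.propDecidable

set_option maxHeartbeats 1000000

/-- Hankel matrix of the sequence `(β a, β (a+1), …, β (a+2m))`. -/
def Hmat (β : ℕ → ℝ) (a m : ℕ) : Matrix (Fin (m + 1)) (Fin (m + 1)) ℝ :=
  Matrix.of fun i j => β (a + i + j)

/-- `j`-th column of the Hankel matrix of `(β a, …, β (a+2m))`. -/
def Hcol (β : ℕ → ℝ) (a m : ℕ) (j : ℕ) : Fin (m + 1) → ℝ := fun ℓ => β (a + j + ℓ)

/-- The rank of the sequence `(β a, …, β (a+2m))`. -/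
def seqRank (β : ℕ → ℝ) (a m : ℕ) : ℕ :=
  if IsUnit (Hmat β a m).det then m + 1
  else sInf {i : ℕ | Hcol β a m i ∈ Submodule.span ℝ (Hcol β a m '' Set.Iio i)}

/-- Moore–Penrose pseudoinverse of a real matrix. -/
def pinv {n m : Type*} [Fintype n] [Fintype m] (A : Matrix n m ℝ) : Matrix m n ℝ :=
  if h : ∃ B : Matrix m n ℝ,
      A * B * A = A ∧ B * A * B = B ∧ (A * B)ᵀ = A * B ∧ (B * A)ᵀ = B * A
  then h.choose else 0

/-- `μ` is a representing measure on `ℝ` for the sequence `(β 0, …, β n)`. -/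
def IsRepMeas (β : ℕ → ℝ) (n : ℕ) (μ : Measure ℝ) : Prop :=
  (∀ i ≤ n, Integrable (fun x : ℝ => x ^ i) μ) ∧ (∀ i ≤ n, β i = ∫ x : ℝ, x ^ i ∂μ)

/-- `μ` is an `r`-atomic measure. -/
def IsAtomicM {α : Type*} [MeasurableSpace α] (μ : Measure α) (r : ℕ) : Prop :=
  ∃ (x : Fin r → α) (c : Fin r → ℝ), Function.Injective x ∧ (∀ ℓ, 0 < c ℓ) ∧
    μ = ∑ ℓ : Fin r, (ENNReal.ofReal (c ℓ)) • Measure.dirac (x ℓ)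

/-- `(β 0, …, β n)` has a representing measure on `ℝ`. -/
def HasRep (β : ℕ → ℝ) (n : ℕ) : Prop := ∃ μ : Measure ℝ, IsRepMeas β n μ

/-- `(β 0, …, β n)` has an `r`-atomic representing measure on `ℝ`. -/
def HasAtomicRep (β : ℕ → ℝ) (n r : ℕ) : Prop :=
  ∃ μ : Measure ℝ, IsRepMeas β n μ ∧ IsAtomicM μ r

/-- The partial Hankel matrix of `(β 0, …, β 2k)`, with the entries at positions `(i, j)`
with `i + j ∈ miss` unspecified, is partially positive semidefinite: every fully specified
principal submatrix is positive semidefinite. -/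
def PartialPSD (β : ℕ → ℝ) (k : ℕ) (miss : Set ℕ) : Prop :=
  ∀ S : Finset (Fin (k + 1)),
    (∀ i ∈ S, ∀ j ∈ S, ((i : ℕ) + (j : ℕ)) ∉ miss) →
    Matrix.PosSemidef ((Hmat β 0 k).submatrix
      (fun a : S => (a : Fin (k + 1))) (fun a : S => (a : Fin (k + 1))))

/-- The bordered matrix `[[A, vᵀ],[v, c]]`. -/
def borderB {n : Type*} [Fintype n] (A : Matrix n n ℝ) (v : n → ℝ) (c : ℝ) :
    Matrix (n ⊕ Unit) (n ⊕ Unit) ℝ :=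
  Matrix.fromBlocks A (Matrix.of fun i _ => v i) (Matrix.of fun _ j => v j)
    (Matrix.of fun _ _ => c)

/-- The bordered matrix `[[c, v],[vᵀ, A]]`. -/
def borderT {n : Type*} [Fintype n] (c : ℝ) (v : n → ℝ) (A : Matrix n n ℝ) :
    Matrix (Unit ⊕ n) (Unit ⊕ n) ℝ :=
  Matrix.fromBlocks (Matrix.of fun _ _ => c) (Matrix.of fun _ j => v j)
    (Matrix.of fun i _ => v i) A

/-- The partial matrix `A(x) = [[A₁, a, b],[aᵀ, α, x],[bᵀ, x, β]]`, where the entry `x`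
(at the positions `(inr 0, inr 1)` and `(inr 1, inr 0)`) is unspecified. -/
def Amat {m : ℕ} (A₁ : Matrix (Fin m) (Fin m) ℝ) (a b : Fin m → ℝ) (α βv x : ℝ) :
    Matrix (Fin m ⊕ Fin 2) (Fin m ⊕ Fin 2) ℝ :=
  Matrix.fromBlocks A₁
    (Matrix.of fun i j => if j = 0 then a i else b i)
    (Matrix.of fun i j => if i = 0 then a j else b j)
    (Matrix.of fun i j =>
      if i = 0 then (if j = 0 then α else x) else (if j = 0 then x else βv))

/-- `A(x)` is partially positive semidefinite: every principal submatrix not containing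
the unspecified entry `x` is positive semidefinite. -/
def PartialPSDCompl {m : ℕ} (A₁ : Matrix (Fin m) (Fin m) ℝ) (a b : Fin m → ℝ)
    (α βv : ℝ) : Prop :=
  ∀ S : Finset (Fin m ⊕ Fin 2), ¬ (Sum.inr 0 ∈ S ∧ Sum.inr 1 ∈ S) →
    Matrix.PosSemidef ((Amat A₁ a b α βv 0).submatrix
      (fun p : S => (p : Fin m ⊕ Fin 2)) (fun p : S => (p : Fin m ⊕ Fin 2)))

section PsdCompletionAux

lemma conj_mul_conj {n : Type*} [Fintype n] [DecidableEq n] {U : Matrix n n ℝ}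
    (hUU : star U * U = 1) (X Y : Matrix n n ℝ) :
    (U * X * star U) * (U * Y * star U) = U * (X * Y) * star U := by
  rw [mul_assoc (U * X)]
  rw [show star U * (U * Y * star U) = Y * star U by rw [← mul_assoc, ← mul_assoc, hUU, one_mul]]
  noncomm_ring

lemma exists_penrose {n : Type*} [Fintype n] [DecidableEq n] {A : Matrix n n ℝ}
    (hA : A.IsHermitian) :
    ∃ B : Matrix n n ℝ, A*B*A = A ∧ B*A*B = B ∧ (A*B)ᵀ = A*B ∧ (B*A)ᵀ = B*A := by
  classical
  set U : Matrix n n ℝ := (hA.eigenvectorUnitary : Matrix n n ℝ) with hU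
  have hUU : star U * U = 1 := (Matrix.mem_unitaryGroup_iff').mp hA.eigenvectorUnitary.2
  set d : n → ℝ := hA.eigenvalues with hd
  have hspec : A = U * Matrix.diagonal d * star U := by simpa using hA.spectral_theorem
  set e : n → ℝ := fun i => if d i = 0 then 0 else (d i)⁻¹ with he
  have hsym : ∀ f : n → ℝ, (U * Matrix.diagonal f * star U)ᵀ = U * Matrix.diagonal f * star U := by
    intro f
    have hstar : star U = Uᵀ := by
      rw [Matrix.star_eq_conjTranspose, Matrix.conjTranspose_eq_transpose_of_trivial]
    rw [hstar, Matrix.transpose_mul, Matrix.transpose_mul, Matrix.transpose_transpose,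
      Matrix.diagonal_transpose, mul_assoc]
  refine ⟨U * Matrix.diagonal e * star U, ?_, ?_, ?_, ?_⟩
  · rw [hspec, conj_mul_conj hUU, conj_mul_conj hUU, Matrix.diagonal_mul_diagonal,
      Matrix.diagonal_mul_diagonal]
    have hfe : (fun i => d i * e i * d i) = d := by
      funext i; rw [he]; by_cases h : d i = 0 <;> simp [h]
    rw [hfe]
  · rw [hspec, conj_mul_conj hUU, conj_mul_conj hUU, Matrix.diagonal_mul_diagonal,
      Matrix.diagonal_mul_diagonal]
    have hfe : (fun i => e i * d i * e i) = e := by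
      funext i; rw [he]; by_cases h : d i = 0 <;> simp [h]
    rw [hfe]
  · rw [hspec, conj_mul_conj hUU, Matrix.diagonal_mul_diagonal]; exact hsym _
  · rw [hspec, conj_mul_conj hUU, Matrix.diagonal_mul_diagonal]; exact hsym _

lemma pinv_spec {n : Type*} [Fintype n] [DecidableEq n] {A : Matrix n n ℝ}
    (hA : A.IsHermitian) :
    A * pinv A * A = A ∧ pinv A * A * pinv A = pinv A ∧ (A * pinv A)ᵀ = A * pinv A ∧
      (pinv A * A)ᵀ = pinv A * A := by
  have h := exists_penrose hA
  rw [pinv, dif_pos h]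
  exact h.choose_spec

lemma pinv_range {n : Type*} [Fintype n] [DecidableEq n] {A : Matrix n n ℝ}
    (hA : A.IsHermitian) {a : n → ℝ} (ha : ∀ y, A *ᵥ y = 0 → a ⬝ᵥ y = 0) :
    A *ᵥ (pinv A *ᵥ a) = a := by
  obtain ⟨h1, h2, h3, h4⟩ := pinv_spec hA
  set B := pinv A with hB
  have hAt : Aᵀ = A := by
    rw [← Matrix.conjTranspose_eq_transpose_of_trivial]; exact hA.eq
  have hAAB : A * (A * B) = A := by
    have h := congrArg Matrix.transpose h1
    rwa [Matrix.transpose_mul, h3, hAt] at h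
  have hAB : A * B = Bᵀ * A := by
    conv_lhs => rw [← h3]
    rw [Matrix.transpose_mul, hAt]
  set q : n → ℝ := a - A *ᵥ (B *ᵥ a) with hq
  have hAq : A *ᵥ q = 0 := by
    rw [hq, Matrix.mulVec_sub, Matrix.mulVec_mulVec, Matrix.mulVec_mulVec,
      show A * A * B = A * (A * B) from mul_assoc A A B, hAAB, sub_self]
  have haq : a ⬝ᵥ q = 0 := ha q hAq
  have hMq : (A * B) *ᵥ q = 0 := by
    rw [hAB, ← Matrix.mulVec_mulVec, hAq, Matrix.mulVec_zero]
  have hqq : q ⬝ᵥ q = 0 := by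
    nth_rewrite 1 [hq]
    rw [sub_dotProduct, haq, Matrix.mulVec_mulVec]
    rw [dotProduct_comm, dotProduct_mulVec]
    rw [show q ᵥ* (A * B) = (A*B)ᵀ *ᵥ q by
      conv_lhs => rw [show A * B = ((A*B)ᵀ)ᵀ from (Matrix.transpose_transpose _).symm,
        Matrix.vecMul_transpose]]
    rw [h3, hMq]
    simp
  have hq0 : q = 0 := dotProduct_self_eq_zero.mp hqq
  have h0 : a - A *ᵥ (B *ᵥ a) = 0 := hq0
  rw [Matrix.mulVec_mulVec] at h0 ⊢
  rw [sub_eq_zero] at h0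
  exact h0.symm

lemma submatrix_psd_quad {ι : Type*} [Fintype ι] [DecidableEq ι] (M : Matrix ι ι ℝ)
    (S : Finset ι)
    (h : Matrix.PosSemidef (M.submatrix (fun a : S => (a : ι)) (fun a : S => (a : ι))))
    (x : ι → ℝ) (hx : ∀ i, i ∉ S → x i = 0) : 0 ≤ x ⬝ᵥ M *ᵥ x := by
  have h2 := h.dotProduct_mulVec_nonneg (fun p : S => x p)
  have hstar : (star fun p : S => x p) = fun p : S => x p := by funext p; simp
  rw [hstar] at h2
  have key : (fun p : S => x p) ⬝ᵥ (M.submatrix (fun a : S => (a : ι)) (fun a : S => (a : ι)))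
      *ᵥ (fun p : S => x p) = x ⬝ᵥ M *ᵥ x := by
    unfold dotProduct Matrix.mulVec dotProduct
    simp only [Matrix.submatrix_apply]
    have e1 : ∀ i : ι, (∑ j : S, M i j * x j) = ∑ j : ι, M i j * x j := by
      intro i
      rw [Finset.sum_coe_sort S (fun j => M i j * x j)]
      exact Finset.sum_subset (Finset.subset_univ S) (fun j _ hj => by rw [hx j hj, mul_zero])
    have e2 : (∑ p : S, x p * ∑ q : S, M p q * x q) = ∑ p : S, x p * ∑ j : ι, M p j * x j :=
      Finset.sum_congr rfl (fun p _ => by rw [e1])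
    rw [e2, Finset.sum_coe_sort S (fun i => x i * ∑ j : ι, M i j * x j)]
    exact Finset.sum_subset (Finset.subset_univ S) (fun i _ hi => by rw [hx i hi, zero_mul])
  rw [key] at h2
  simpa using h2

lemma amat_quad {m : ℕ} (A₁ : Matrix (Fin m) (Fin m) ℝ) (a b : Fin m → ℝ) (α βv x : ℝ)
    (y : Fin m → ℝ) (c d : ℝ) :
    (Sum.elim y ![c, d]) ⬝ᵥ (Amat A₁ a b α βv x) *ᵥ (Sum.elim y ![c, d])
      = y ⬝ᵥ A₁ *ᵥ y + c * (a ⬝ᵥ y) + d * (b ⬝ᵥ y) + c * (y ⬝ᵥ a) + d * (y ⬝ᵥ b)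
        + α * c * c + βv * d * d + 2 * x * c * d := by
  rw [Amat, Matrix.fromBlocks_mulVec, sumElim_dotProduct_sumElim]
  simp only [Sum.elim_comp_inl, Sum.elim_comp_inr]
  have hB : (Matrix.of fun i j => if j = 0 then a i else b i) *ᵥ ![c, d]
      = fun i => c * a i + d * b i := by
    funext i
    simp [Matrix.mulVec, dotProduct, Fin.sum_univ_two, mul_comm]
  have hC : (Matrix.of fun (i : Fin 2) j => if i = 0 then a j else b j) *ᵥ y
      = ![a ⬝ᵥ y, b ⬝ᵥ y] := by
    funext i
    fin_cases i <;> simp [Matrix.mulVec, dotProduct]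
  have hD : (Matrix.of fun i j =>
        if i = 0 then (if j = 0 then α else x) else (if j = 0 then x else βv)) *ᵥ ![c, d]
      = ![α * c + x * d, x * c + βv * d] := by
    funext i
    fin_cases i <;> simp [Matrix.mulVec, dotProduct, Fin.sum_univ_two]
  rw [hB, hC, hD]
  have hf : (fun i => c * a i + d * b i) = c • a + d • b := funext fun i => by simp
  rw [hf, dotProduct_add, dotProduct_add, dotProduct_smul,
    dotProduct_smul]
  have e2 : ![c,d] ⬝ᵥ (![a ⬝ᵥ y, b ⬝ᵥ y] + ![α*c+x*d, x*c+βv*d])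
      = c*(a ⬝ᵥ y) + d*(b ⬝ᵥ y) + α*c*c + βv*d*d + 2*x*c*d := by
    simp [dotProduct, Fin.sum_univ_two]
    ring
  rw [e2]
  simp only [smul_eq_mul]
  ring

lemma amat_isHermitian {m : ℕ} {A₁ : Matrix (Fin m) (Fin m) ℝ} (hA₁ : A₁.IsSymm)
    (a b : Fin m → ℝ) (α βv x : ℝ) : (Amat A₁ a b α βv x).IsHermitian := by
  rw [Matrix.IsHermitian, Matrix.conjTranspose_eq_transpose_of_trivial]
  ext p q
  rcases p with i | i <;> rcases q with j | j
  · simpa [Amat] using hA₁.apply i j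
  · simp [Amat]
  · simp [Amat]
  · fin_cases i <;> fin_cases j <;> simp [Amat]

end PsdCompletionAux

/-- Positive semidefinite completions of a partially positive semidefinite matrix with one
unknown entry: `A(x₀)` is psd iff `x₀ ∈ [x₋, x₊]`. -/
theorem psd_completion {m : ℕ} (A₁ : Matrix (Fin m) (Fin m) ℝ) (hA₁ : A₁.IsSymm)
    (a b : Fin m → ℝ) (α βv : ℝ)
    (hppsd : PartialPSDCompl A₁ a b α βv)
    (hassump : IsUnit A₁.det ∨ A₁.rank = (borderB A₁ a α).rank) :
    ∀ x₀ : ℝ, (Amat A₁ a b α βv x₀).PosSemidef ↔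
      x₀ ∈ Set.Icc
        (b ⬝ᵥ (pinv A₁) *ᵥ a -
          Real.sqrt ((α - a ⬝ᵥ (pinv A₁) *ᵥ a) * (βv - b ⬝ᵥ (pinv A₁) *ᵥ b)))
        (b ⬝ᵥ (pinv A₁) *ᵥ a +
          Real.sqrt ((α - a ⬝ᵥ (pinv A₁) *ᵥ a) * (βv - b ⬝ᵥ (pinv A₁) *ᵥ b))) := by
  classical
  have hA₁H : A₁.IsHermitian := by
    rw [Matrix.IsHermitian, Matrix.conjTranspose_eq_transpose_of_trivial]; exact hA₁
  have hvm : ∀ z : Fin m → ℝ, z ᵥ* A₁ = A₁ *ᵥ z := by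
    intro z
    conv_lhs => rw [← hA₁]
    rw [Matrix.vecMul_transpose]
  have hmv : ∀ z y : Fin m → ℝ, z ⬝ᵥ A₁ *ᵥ y = (A₁ *ᵥ z) ⬝ᵥ y := by
    intro z y; rw [dotProduct_mulVec, hvm]
  -- quadratic-form facts from partial psd-ness
  have hq2 : ∀ (y : Fin m → ℝ) (c : ℝ), 0 ≤ y ⬝ᵥ A₁ *ᵥ y + 2*c*(a ⬝ᵥ y) + α*c*c := by
    intro y c
    have hS : ¬ (Sum.inr 0 ∈ Finset.univ.filter (fun p : Fin m ⊕ Fin 2 => p ≠ Sum.inr 1)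
        ∧ Sum.inr 1 ∈ Finset.univ.filter (fun p : Fin m ⊕ Fin 2 => p ≠ Sum.inr 1)) := by
      simp
    have h := submatrix_psd_quad (Amat A₁ a b α βv 0) _ (hppsd _ hS) (Sum.elim y ![c, 0]) ?_
    · rw [amat_quad, dotProduct_comm y a] at h
      linarith
    · intro p hp
      have hp1 : p = Sum.inr 1 := by simpa using hp
      subst hp1; simp
  have hq3 : ∀ (y : Fin m → ℝ) (d : ℝ), 0 ≤ y ⬝ᵥ A₁ *ᵥ y + 2*d*(b ⬝ᵥ y) + βv*d*d := by
    intro y d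
    have hS : ¬ (Sum.inr 0 ∈ Finset.univ.filter (fun p : Fin m ⊕ Fin 2 => p ≠ Sum.inr 0)
        ∧ Sum.inr 1 ∈ Finset.univ.filter (fun p : Fin m ⊕ Fin 2 => p ≠ Sum.inr 0)) := by
      simp
    have h := submatrix_psd_quad (Amat A₁ a b α βv 0) _ (hppsd _ hS) (Sum.elim y ![0, d]) ?_
    · rw [amat_quad, dotProduct_comm y b] at h
      linarith
    · intro p hp
      have hp0 : p = Sum.inr 0 := by simpa using hp
      subst hp0; simp
  have hq1 : ∀ y : Fin m → ℝ, 0 ≤ y ⬝ᵥ A₁ *ᵥ y := by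
    intro y; have := hq2 y 0; linarith
  have hα : 0 ≤ α := by
    have := hq2 0 1; simpa using this
  have hβ : 0 ≤ βv := by
    have := hq3 0 1; simpa using this
  have hkera : ∀ y, A₁ *ᵥ y = 0 → a ⬝ᵥ y = 0 := by
    intro y hy
    by_contra hne
    have h := hq2 y (-(a ⬝ᵥ y)/(α+1))
    rw [hy, dotProduct_zero] at h
    have hg : (a ⬝ᵥ y) ≠ 0 := hne
    have hα1 : (0:ℝ) < α + 1 := by linarith
    have hα1' : α + 1 ≠ 0 := ne_of_gt hα1
    field_simp at h
    nlinarith [h, mul_pos (mul_self_pos.mpr hg) (show (0:ℝ) < α + 2 by linarith)]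
  have hkerb : ∀ y, A₁ *ᵥ y = 0 → b ⬝ᵥ y = 0 := by
    intro y hy
    by_contra hne
    have h := hq3 y (-(b ⬝ᵥ y)/(βv+1))
    rw [hy, dotProduct_zero] at h
    have hg : (b ⬝ᵥ y) ≠ 0 := hne
    have hβ1 : (0:ℝ) < βv + 1 := by linarith
    have hβ1' : βv + 1 ≠ 0 := ne_of_gt hβ1
    field_simp at h
    nlinarith [h, mul_pos (mul_self_pos.mpr hg) (show (0:ℝ) < βv + 2 by linarith)]
  set u : Fin m → ℝ := pinv A₁ *ᵥ a with hu_def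
  set v : Fin m → ℝ := pinv A₁ *ᵥ b with hv_def
  have hu : A₁ *ᵥ u = a := pinv_range hA₁H hkera
  have hv : A₁ *ᵥ v = b := pinv_range hA₁H hkerb
  set w : ℝ := b ⬝ᵥ u with hw_def
  set s : ℝ := α - a ⬝ᵥ u with hs_def
  set t : ℝ := βv - b ⬝ᵥ v with ht_def
  have hs : 0 ≤ s := by
    have h := hq2 (-u) 1
    rw [Matrix.mulVec_neg, hu] at h
    simp only [dotProduct_neg, neg_dotProduct, neg_neg, mul_one, mul_neg] at h
    rw [dotProduct_comm u a] at h
    simp only [hs_def]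
    linarith [h]
  have ht : 0 ≤ t := by
    have h := hq3 (-v) 1
    rw [Matrix.mulVec_neg, hv] at h
    simp only [dotProduct_neg, neg_dotProduct, neg_neg, mul_one, mul_neg] at h
    rw [dotProduct_comm v b] at h
    simp only [ht_def]
    linarith [h]
  have hav : a ⬝ᵥ v = w := by
    rw [hw_def, ← hu, ← hv]
    rw [show (A₁ *ᵥ u) ⬝ᵥ v = v ⬝ᵥ (A₁ *ᵥ u) from dotProduct_comm _ _, hmv]
  intro x₀
  -- the key congruence identity
  have key : ∀ (y : Fin m → ℝ) (c d : ℝ),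
      (Sum.elim y ![c, d]) ⬝ᵥ (Amat A₁ a b α βv x₀) *ᵥ (Sum.elim y ![c, d])
        = (y + c • u + d • v) ⬝ᵥ A₁ *ᵥ (y + c • u + d • v)
          + s*c^2 + t*d^2 + 2*(x₀ - w)*c*d := by
    intro y c d
    rw [amat_quad]
    rw [Matrix.mulVec_add, Matrix.mulVec_add, Matrix.mulVec_smul, Matrix.mulVec_smul, hu, hv]
    simp only [add_dotProduct, smul_dotProduct, dotProduct_add,
      dotProduct_smul, smul_eq_mul]
    rw [hmv u y, hmv v y, hu, hv]
    rw [dotProduct_comm y a, dotProduct_comm y b,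
      dotProduct_comm u a, dotProduct_comm u b,
      dotProduct_comm v a, dotProduct_comm v b, hav]
    rw [hs_def, ht_def, hw_def, dotProduct_comm b u]
    ring
  have hstmul : 0 ≤ s * t := mul_nonneg hs ht
  have hr2 : Real.sqrt (s*t) ^ 2 = s * t := Real.sq_sqrt hstmul
  have hr0 : 0 ≤ Real.sqrt (s*t) := Real.sqrt_nonneg _
  constructor
  · intro hpsd
    have hq : ∀ c d : ℝ, 0 ≤ s*c^2 + t*d^2 + 2*(x₀-w)*c*d := by
      intro c d
      have h := hpsd.dotProduct_mulVec_nonneg (Sum.elim (-(c • u) - d • v) ![c, d])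
      have hstar : (star (Sum.elim (-(c • u) - d • v) ![c, d]))
          = Sum.elim (-(c • u) - d • v) ![c, d] := by funext p; simp
      rw [hstar, key] at h
      have hz : (-(c • u) - d • v) + c • u + d • v = 0 := by abel
      rw [hz, zero_dotProduct] at h
      simpa using h
    set e : ℝ := x₀ - w with he_def
    have he2 : e^2 ≤ s*t := by
      rcases eq_or_lt_of_le hs with hs0 | hs0
      · have he0 : e = 0 := by
          by_contra hne
          have h := hq (-(t+1)/(2*e)) 1
          rw [← hs0] at h
          have hcalc : 2*e*(-(t+1)/(2*e))*1 = -(t+1) := by field_simp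
          nlinarith [h]
        rw [he0, ← hs0]
        simp
      · have h := hq (-e) s
        nlinarith [h, hs0]
    have habs : |e| ≤ Real.sqrt (s*t) := by
      rw [← Real.sqrt_sq_eq_abs]
      exact Real.sqrt_le_sqrt he2
    rw [abs_le] at habs
    rw [Set.mem_Icc]
    constructor <;> [linarith [habs.1]; linarith [habs.2]]
  · intro hx
    rw [Set.mem_Icc] at hx
    have habs1 : -(Real.sqrt (s*t)) ≤ x₀ - w := by linarith [hx.1]
    have habs2 : x₀ - w ≤ Real.sqrt (s*t) := by linarith [hx.2]
    refine PosSemidef.of_dotProduct_mulVec_nonneg (amat_isHermitian hA₁ a b α βv x₀) ?_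
    intro z
    have hstar : star z = z := by funext p; simp
    rw [hstar]
    have hz : z = Sum.elim (fun i => z (Sum.inl i)) ![z (Sum.inr 0), z (Sum.inr 1)] := by
      funext p
      rcases p with i | j
      · rfl
      · fin_cases j <;> rfl
    rw [hz, key]
    set y : Fin m → ℝ := fun i => z (Sum.inl i)
    set c : ℝ := z (Sum.inr 0)
    set d : ℝ := z (Sum.inr 1)
    have h1 : 0 ≤ (y + c • u + d • v) ⬝ᵥ A₁ *ᵥ (y + c • u + d • v) := hq1 _
    have hmul : Real.sqrt (s*t) = Real.sqrt s * Real.sqrt t := Real.sqrt_mul hs t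
    have hss : Real.sqrt s ^ 2 = s := Real.sq_sqrt hs
    have htt : Real.sqrt t ^ 2 = t := Real.sq_sqrt ht
    rw [hmul] at habs1 habs2
    have h2 : 0 ≤ s*c^2 + t*d^2 + 2*(x₀-w)*c*d := by
      rcases le_or_gt 0 (c*d) with hcd | hcd
      · nlinarith [sq_nonneg (Real.sqrt s * c - Real.sqrt t * d), habs1, hcd, hss, htt]
      · nlinarith [sq_nonneg (Real.sqrt s * c + Real.sqrt t * d), habs2, hcd, hss, htt]
    linarith [h1, h2]


end
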